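/- Let k > 0 be real and t ∈ ℝ. Then the complex number (−i·k − t)/(−i·k + t) has modulus exactly 1. -/

import Mathlib

theorem stmt_9 (k : ℝ) (hk : 0 < k) (t : ℝ) :
    ‖(-Complex.I * k - t) / (-Complex.I * k + t)‖ = 1 := by
  rw [norm_div]
  have hden : ‖-Complex.I * k + t‖ = Real.sqrt (t ^ 2 + k ^ 2) := by
    rw [Complex.norm_def, Complex.normSq_apply]
    simp [Complex.add_re, Complex.add_im]
    ring_nf
  have hnum : ‖-Complex.I * k - t‖ = Real.sqrt (t ^ 2 + k ^ 2) := by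
    rw [Complex.norm_def, Complex.normSq_apply]
    simp [Complex.sub_re, Complex.sub_im]
    ring_nf
  rw [hnum, hden, div_self]
  positivity
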